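/- Let A : [0,1]² → ℝ be α-Hölder continuous and m = max_{ν∈M}∫Adν. Then there exists a continuous backward subaction u : [0,1] → ℝ that is separating: max_y { u(y) − u(x) + A(x,y) } = m if and only if x ∈ Ω(A). -/

import Mathlib

open MeasureTheory unitInterval

open ENNReal
namespace Stmt19X


/-- Hölder implies continuous on a set. -/
lemma contOn_of_holder {X : Type*} [PseudoMetricSpace X] {f : X → ℝ} {s : Set X}
    {C α : ℝ} (hα : 0 < α) (hC : 0 ≤ C)
    (h : ∀ x ∈ s, ∀ y ∈ s, |f x - f y| ≤ C * (dist x y) ^ α) :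
    ContinuousOn f s := by
  rw [Metric.continuousOn_iff]
  intro b hb ε hε
  have hC1 : (0:ℝ) < C + 1 := by linarith
  have hq : (0:ℝ) < ε / (C + 1) := by positivity
  refine ⟨(ε / (C + 1)) ^ α⁻¹, Real.rpow_pos_of_pos hq _, fun a ha hd => ?_⟩
  have h1 : dist a b ^ α ≤ ε / (C + 1) := by
    calc dist a b ^ α ≤ ((ε / (C + 1)) ^ α⁻¹) ^ α :=
          Real.rpow_le_rpow dist_nonneg hd.le hα.le
      _ = ε / (C + 1) := Real.rpow_inv_rpow hq.le hα.ne'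
  have h2 : C * dist a b ^ α ≤ C * (ε / (C + 1)) := by
    exact mul_le_mul_of_nonneg_left h1 hC
  have h3 : C * (ε / (C + 1)) < ε := by
    rw [mul_div_assoc'] at *
    rw [div_lt_iff₀ hC1]
    nlinarith
  calc dist (f a) (f b) = |f a - f b| := Real.dist_eq _ _
    _ ≤ C * dist a b ^ α := h a ha b hb
    _ < ε := lt_of_le_of_lt h2 h3

lemma integrable_dirac {α E : Type*} [MeasurableSpace α] [MeasurableSingletonClass α]
    [NormedAddCommGroup E] {f : α → E} (hf : MeasureTheory.StronglyMeasurable f) (a : α) :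
    Integrable f (Measure.dirac a) := by
  refine ⟨hf.aestronglyMeasurable, ?_⟩
  unfold HasFiniteIntegral
  rw [lintegral_dirac]
  exact ENNReal.coe_lt_top

variable {A : ℝ → ℝ → ℝ} {m : ℝ}

/-- Any closed cycle in [0,1] has sum of (A - m) nonpositive, because its empirical
measure is holonomic. -/
lemma cycle_nonpos (hAc : Continuous (fun p : I × I => A p.1 p.2))
    (hmub : ∀ ν : ProbabilityMeasure (I × I),
      (∀ f : C(I, ℝ), ∫ p, (f p.1 - f p.2) ∂(ν : Measure (I × I)) = 0) →
      ∫ p, A p.1 p.2 ∂(ν : Measure (I × I)) ≤ m)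
    {k : ℕ} (hk : 2 ≤ k) {p : ℕ → ℝ} (hmem : ∀ i < k, p i ∈ Set.Icc (0:ℝ) 1)
    (hcyc : p (k - 1) = p 0) :
    ∑ i ∈ Finset.range (k - 1), (A (p i) (p (i + 1)) - m) ≤ 0 := by
  set q : ℕ → I := fun i => Set.projIcc 0 1 zero_le_one (p i) with hqdef
  have hq : ∀ i < k, (q i : ℝ) = p i := by
    intro i hi
    simp only [hqdef]
    rw [Set.projIcc_of_mem _ (hmem i hi)]
  have hk1 : 0 < k - 1 := by omega
  have hk1' : k - 1 < k := by omega
  -- the empirical measure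
  set μ0 : Measure (I × I) := ∑ i ∈ Finset.range (k - 1), Measure.dirac (q i, q (i + 1))
    with hμ0
  have hμ0univ : μ0 Set.univ = (k - 1 : ℕ) := by
    simp [hμ0, Measure.coe_finset_sum, Finset.sum_apply]
  set c : ℝ≥0∞ := ((k - 1 : ℕ) : ℝ≥0∞)⁻¹ with hc
  have hcne : ((k - 1 : ℕ) : ℝ≥0∞) ≠ 0 :=
    Nat.cast_ne_zero.mpr (by omega)
  have hctop : ((k - 1 : ℕ) : ℝ≥0∞) ≠ ⊤ := by simp
  set ν : Measure (I × I) := c • μ0 with hν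
  have hprob : IsProbabilityMeasure ν := by
    constructor
    rw [hν, Measure.smul_apply, hμ0univ, smul_eq_mul, hc, ENNReal.inv_mul_cancel hcne hctop]
  have hctoReal : c.toReal = ((k - 1 : ℕ) : ℝ)⁻¹ := by
    rw [hc, ENNReal.toReal_inv, ENNReal.toReal_natCast]
  -- integral of any g against ν
  have hint : ∀ g : I × I → ℝ, Continuous g →
      ∫ x, g x ∂ν = ((k - 1 : ℕ) : ℝ)⁻¹ * ∑ i ∈ Finset.range (k - 1), g (q i, q (i + 1)) := by
    intro g hg
    rw [hν, integral_smul_measure, hμ0,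
      integral_finset_sum_measure (fun i _ => Stmt19X.integrable_dirac hg.stronglyMeasurable _)]
    simp only [hctoReal, smul_eq_mul]
    congr 1
    refine Finset.sum_congr rfl fun i _ => ?_
    exact integral_dirac g _
  have hq0 : q (k - 1) = q 0 := by
    apply Subtype.ext
    rw [hq _ hk1', hq 0 (by omega), hcyc]
  have hhol : ∀ f : C(I, ℝ), ∫ pp, (f pp.1 - f pp.2) ∂ν = 0 := by
    intro f
    have hg : Continuous fun pp : I × I => f pp.1 - f pp.2 :=
      (f.continuous.comp continuous_fst).sub (f.continuous.comp continuous_snd)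
    rw [hint _ hg]
    have htel : ∑ i ∈ Finset.range (k - 1), (f (q i) - f (q (i + 1)))
        = f (q 0) - f (q (k - 1)) := Finset.sum_range_sub' (fun i => f (q i)) (k - 1)
    rw [htel, hq0, sub_self, mul_zero]
  have hνmem : ∫ pp, A (pp.1 : ℝ) (pp.2 : ℝ) ∂ν ≤ m := hmub ⟨ν, hprob⟩ hhol
  rw [hint _ hAc] at hνmem
  have hsum : ∑ i ∈ Finset.range (k - 1), A ((q i : ℝ)) ((q (i + 1) : ℝ))
      = ∑ i ∈ Finset.range (k - 1), A (p i) (p (i + 1)) := by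
    refine Finset.sum_congr rfl fun i hi => ?_
    rw [Finset.mem_range] at hi
    rw [hq i (by omega), hq (i + 1) (by omega)]
  rw [hsum] at hνmem
  have hkpos : (0:ℝ) < ((k - 1 : ℕ) : ℝ) := by exact_mod_cast hk1
  have h2 : ∑ i ∈ Finset.range (k - 1), A (p i) (p (i + 1)) ≤ ((k - 1 : ℕ) : ℝ) * m := by
    rwa [inv_mul_le_iff₀ hkpos] at hνmem
  rw [Finset.sum_sub_distrib, Finset.sum_const, Finset.card_range, nsmul_eq_mul]
  linarith

def pset (A : ℝ → ℝ → ℝ) (m w x : ℝ) : Set ℝ :=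
  {s | ∃ k : ℕ, 2 ≤ k ∧ ∃ p : ℕ → ℝ, p 0 = w ∧ p (k - 1) = x ∧
    (∀ i < k, p i ∈ Set.Icc (0:ℝ) 1) ∧
    s = ∑ i ∈ Finset.range (k - 1), (A (p i) (p (i + 1)) - m)}

noncomputable def R (A : ℝ → ℝ → ℝ) (m w x : ℝ) : ℝ := sSup (pset A m w x)

lemma sum_diff_single {g g' : ℕ → ℝ} {n j : ℕ} (hj : j < n)
    (h : ∀ i < n, i ≠ j → g' i = g i) :
    ∑ i ∈ Finset.range n, g' i - ∑ i ∈ Finset.range n, g i = g' j - g j := by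
  rw [← Finset.sum_sub_distrib,
    Finset.sum_eq_single_of_mem j (Finset.mem_range.mpr hj)
      (fun i hi hne => by rw [h i (Finset.mem_range.mp hi) hne, sub_self])]

lemma pset_direct {w x : ℝ} (hw : w ∈ Set.Icc (0:ℝ) 1) (hx : x ∈ Set.Icc (0:ℝ) 1) :
    A w x - m ∈ pset A m w x := by
  refine ⟨2, le_refl 2, fun i => if i = 0 then w else x, by simp, by norm_num, ?_, by norm_num⟩
  intro i _
  by_cases h : i = 0 <;> simp [h, hw, hx]

lemma pset_extend {w x z s : ℝ} (hz : z ∈ Set.Icc (0:ℝ) 1)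
    (hs : s ∈ pset A m w x) : s + (A x z - m) ∈ pset A m w z := by
  obtain ⟨k, hk, p, hp0, hpk, hpm, hps⟩ := hs
  refine ⟨k + 1, by omega, fun i => if i ≤ k - 1 then p i else z, ?_, ?_, ?_, ?_⟩
  · simp only [show (0:ℕ) ≤ k - 1 by omega, if_pos]
    exact hp0
  · simp only [Nat.add_sub_cancel]
    rw [if_neg (by omega)]
  · intro i _
    by_cases h : i ≤ k - 1
    · simpa [h] using hpm i (by omega)
    · simpa [h] using hz
  · rw [Nat.add_sub_cancel]
    have hrw : k = (k - 1) + 1 := by omega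
    rw [hrw, Finset.sum_range_succ, ← hrw]
    have h1 : ∑ i ∈ Finset.range (k - 1),
        (A (if i ≤ k - 1 then p i else z) (if i + 1 ≤ k - 1 then p (i + 1) else z) - m)
        = ∑ i ∈ Finset.range (k - 1), (A (p i) (p (i + 1)) - m) := by
      refine Finset.sum_congr rfl fun i hi => ?_
      rw [Finset.mem_range] at hi
      rw [if_pos (by omega), if_pos (by omega)]
    rw [h1, ← hps]
    simp only []
    rw [if_pos (le_refl (k - 1)), if_neg (by omega : ¬ (k ≤ k - 1)), hpk]

lemma pset_cycle_le
    (hcycle : ∀ k : ℕ, 2 ≤ k → ∀ p : ℕ → ℝ, (∀ i < k, p i ∈ Set.Icc (0:ℝ) 1) →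
      p (k - 1) = p 0 → ∑ i ∈ Finset.range (k - 1), (A (p i) (p (i + 1)) - m) ≤ 0)
    {w s : ℝ} (hs : s ∈ pset A m w w) : s ≤ 0 := by
  obtain ⟨k, hk, p, hp0, hpk, hpm, hps⟩ := hs
  exact hps ▸ hcycle k hk p hpm (hpk.trans hp0.symm)

lemma pset_ub
    (hcycle : ∀ k : ℕ, 2 ≤ k → ∀ p : ℕ → ℝ, (∀ i < k, p i ∈ Set.Icc (0:ℝ) 1) →
      p (k - 1) = p 0 → ∑ i ∈ Finset.range (k - 1), (A (p i) (p (i + 1)) - m) ≤ 0)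
    {w x : ℝ} (hw : w ∈ Set.Icc (0:ℝ) 1) (hx : x ∈ Set.Icc (0:ℝ) 1)
    {s : ℝ} (hs : s ∈ pset A m w x) : s ≤ m - A x w := by
  have h1 := pset_cycle_le (A := A) (m := m) hcycle (pset_extend hw hs)
  linarith

lemma pset_bddAbove
    (hcycle : ∀ k : ℕ, 2 ≤ k → ∀ p : ℕ → ℝ, (∀ i < k, p i ∈ Set.Icc (0:ℝ) 1) →
      p (k - 1) = p 0 → ∑ i ∈ Finset.range (k - 1), (A (p i) (p (i + 1)) - m) ≤ 0)
    {w x : ℝ} (hw : w ∈ Set.Icc (0:ℝ) 1) (hx : x ∈ Set.Icc (0:ℝ) 1) :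
    BddAbove (pset A m w x) :=
  ⟨m - A x w, fun _ hs => pset_ub hcycle hw hx hs⟩

lemma R_ge
    (hcycle : ∀ k : ℕ, 2 ≤ k → ∀ p : ℕ → ℝ, (∀ i < k, p i ∈ Set.Icc (0:ℝ) 1) →
      p (k - 1) = p 0 → ∑ i ∈ Finset.range (k - 1), (A (p i) (p (i + 1)) - m) ≤ 0)
    {w x : ℝ} (hw : w ∈ Set.Icc (0:ℝ) 1) (hx : x ∈ Set.Icc (0:ℝ) 1) :
    A w x - m ≤ R A m w x :=
  le_csSup (pset_bddAbove hcycle hw hx) (pset_direct hw hx)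

lemma R_step
    (hcycle : ∀ k : ℕ, 2 ≤ k → ∀ p : ℕ → ℝ, (∀ i < k, p i ∈ Set.Icc (0:ℝ) 1) →
      p (k - 1) = p 0 → ∑ i ∈ Finset.range (k - 1), (A (p i) (p (i + 1)) - m) ≤ 0)
    {w x y : ℝ} (hw : w ∈ Set.Icc (0:ℝ) 1) (hx : x ∈ Set.Icc (0:ℝ) 1)
    (hy : y ∈ Set.Icc (0:ℝ) 1) :
    R A m w x + (A x y - m) ≤ R A m w y := by
  unfold R
  have h1 : sSup (pset A m w x) ≤ sSup (pset A m w y) - (A x y - m) := by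
    refine csSup_le ⟨_, pset_direct hw hx⟩ fun s hs => ?_
    have h2 := le_csSup (pset_bddAbove hcycle hw hy) (pset_extend hy hs)
    linarith
  linarith

variable {C α : ℝ}

lemma R_end_move
    (hcycle : ∀ k : ℕ, 2 ≤ k → ∀ p : ℕ → ℝ, (∀ i < k, p i ∈ Set.Icc (0:ℝ) 1) →
      p (k - 1) = p 0 → ∑ i ∈ Finset.range (k - 1), (A (p i) (p (i + 1)) - m) ≤ 0)
    (hA2 : ∀ a ∈ Set.Icc (0:ℝ) 1, ∀ b ∈ Set.Icc (0:ℝ) 1, ∀ b' ∈ Set.Icc (0:ℝ) 1,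
      |A a b - A a b'| ≤ C * |b - b'| ^ α)
    {w x x' : ℝ} (hw : w ∈ Set.Icc (0:ℝ) 1) (hx : x ∈ Set.Icc (0:ℝ) 1)
    (hx' : x' ∈ Set.Icc (0:ℝ) 1) :
    R A m w x ≤ R A m w x' + C * |x - x'| ^ α := by
  unfold R
  refine csSup_le ⟨_, pset_direct hw hx⟩ fun s hs => ?_
  obtain ⟨k, hk, p, hp0, hpk, hpm, hps⟩ := hs
  have hne0 : ¬ ((0:ℕ) = k - 1) := by omega
  have hne2 : ¬ (k - 2 = k - 1) := by omega
  set p' : ℕ → ℝ := fun i => if i = k - 1 then x' else p i with hp'def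
  have hpt : ∀ i, i ≠ k - 1 → p' i = p i := fun i hi => by simp [hp'def, hi]
  have hptop : p' (k - 1) = x' := by simp [hp'def]
  have hmem' : ∀ i < k, p' i ∈ Set.Icc (0:ℝ) 1 := by
    intro i hi
    by_cases h : i = k - 1
    · rw [h, hptop]; exact hx'
    · rw [hpt i h]; exact hpm i hi
  have hs' : ∑ i ∈ Finset.range (k - 1), (A (p' i) (p' (i + 1)) - m) ∈ pset A m w x' :=
    ⟨k, hk, p', by rw [hpt 0 (by omega)]; exact hp0, hptop, hmem', rfl⟩
  have hdiff : s - ∑ i ∈ Finset.range (k - 1), (A (p' i) (p' (i + 1)) - m)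
      = (A (p (k - 2)) (p (k - 2 + 1)) - m) - (A (p' (k - 2)) (p' (k - 2 + 1)) - m) := by
    rw [hps]
    exact sum_diff_single (g := fun i => A (p' i) (p' (i + 1)) - m)
      (g' := fun i => A (p i) (p (i + 1)) - m) (n := k - 1) (j := k - 2) (by omega)
      (fun i hi hne => by
        show A (p i) (p (i + 1)) - m = A (p' i) (p' (i + 1)) - m
        rw [hpt i (by omega), hpt (i + 1) (by omega)])
  rw [(by omega : k - 2 + 1 = k - 1)] at hdiff
  rw [hpt (k - 2) hne2, hptop, hpk] at hdiff
  have hAb := abs_le.mp (hA2 (p (k - 2)) (hpm _ (by omega)) x hx x' hx')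
  have hb := le_csSup (pset_bddAbove hcycle hw hx') hs'
  linarith

lemma R_to_cycle
    (hA1 : ∀ a ∈ Set.Icc (0:ℝ) 1, ∀ a' ∈ Set.Icc (0:ℝ) 1, ∀ b ∈ Set.Icc (0:ℝ) 1,
      |A a b - A a' b| ≤ C * |a - a'| ^ α)
    {w x ε : ℝ} (hw : w ∈ Set.Icc (0:ℝ) 1) (hx : x ∈ Set.Icc (0:ℝ) 1)
    (hcl : ∀ k : ℕ, 2 ≤ k → ∀ p : ℕ → ℝ, p 0 = x → p (k - 1) = x →
      (∀ i < k, p i ∈ Set.Icc (0:ℝ) 1) →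
      ∑ i ∈ Finset.range (k - 1), (A (p i) (p (i + 1)) - m) ≤ -ε) :
    R A m w x ≤ -ε + C * |w - x| ^ α := by
  unfold R
  refine csSup_le ⟨_, pset_direct hw hx⟩ fun s hs => ?_
  obtain ⟨k, hk, p, hp0, hpk, hpm, hps⟩ := hs
  set p' : ℕ → ℝ := fun i => if i = 0 then x else p i with hp'def
  have hpt : ∀ i, i ≠ 0 → p' i = p i := fun i hi => by simp [hp'def, hi]
  have hpt0 : p' 0 = x := by simp [hp'def]
  have hmem' : ∀ i < k, p' i ∈ Set.Icc (0:ℝ) 1 := by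
    intro i hi
    by_cases h : i = 0
    · rw [h, hpt0]; exact hx
    · rw [hpt i h]; exact hpm i hi
  have hcyc : ∑ i ∈ Finset.range (k - 1), (A (p' i) (p' (i + 1)) - m) ≤ -ε := by
    refine hcl k hk p' hpt0 ?_ hmem'
    rw [hpt (k - 1) (by omega)]; exact hpk
  have hdiff : s - ∑ i ∈ Finset.range (k - 1), (A (p' i) (p' (i + 1)) - m)
      = (A (p 0) (p (0 + 1)) - m) - (A (p' 0) (p' (0 + 1)) - m) := by
    rw [hps]
    exact sum_diff_single (g := fun i => A (p' i) (p' (i + 1)) - m)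
      (g' := fun i => A (p i) (p (i + 1)) - m) (n := k - 1) (j := 0) (by omega)
      (fun i hi hne => by
        show A (p i) (p (i + 1)) - m = A (p' i) (p' (i + 1)) - m
        rw [hpt i hne, hpt (i + 1) (by omega)])
  rw [(by norm_num : (0:ℕ) + 1 = 1)] at hdiff
  rw [hpt 1 one_ne_zero, hpt0, hp0] at hdiff
  have hAb := abs_le.mp (hA1 w hw x hx (p 1) (hpm _ (by omega)))
  linarith

end Stmt19X

/-- x is non-wandering for A (with maximal ergodic value m) -/
def nonWandering (A : ℝ → ℝ → ℝ) (m x : ℝ) : Prop :=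
  x ∈ Set.Icc (0:ℝ) 1 ∧ ∀ ε > 0, ∃ k : ℕ, 2 ≤ k ∧ ∃ p : ℕ → ℝ,
    p 0 = x ∧ p (k - 1) = x ∧ (∀ i < k, p i ∈ Set.Icc (0:ℝ) 1) ∧
    |∑ i ∈ Finset.range (k - 1), (A (p i) (p (i + 1)) - m)| < ε

/-- if A is α-Hölder then there exists a separating backward subaction:
a continuous u with u(x) ≥ A(x,y) + u(y) - m for all x,y, such that
max_y { u(y) - u(x) + A(x,y) } = m iff x ∈ Ω(A). -/
theorem stmt19 (A : ℝ → ℝ → ℝ) (α C : ℝ) (hα : 0 < α ∧ α ≤ 1) (hC : 0 ≤ C)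
    (hHol : ∀ x ∈ Set.Icc (0:ℝ) 1, ∀ y ∈ Set.Icc (0:ℝ) 1, ∀ x' ∈ Set.Icc (0:ℝ) 1,
      ∀ y' ∈ Set.Icc (0:ℝ) 1,
      |A x y - A x' y'| ≤ C * (max |x - x'| |y - y'|) ^ α)
    (m : ℝ)
    (hm : IsGreatest {r : ℝ | ∃ ν : ProbabilityMeasure (I × I),
        (∀ f : C(I, ℝ), ∫ p, (f p.1 - f p.2) ∂(ν : Measure (I × I)) = 0) ∧
        r = ∫ p, A p.1 p.2 ∂(ν : Measure (I × I))} m) :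
    ∃ u : ℝ → ℝ, ContinuousOn u (Set.Icc 0 1) ∧
      (∀ x ∈ Set.Icc (0:ℝ) 1, ∀ y ∈ Set.Icc (0:ℝ) 1, u x ≥ A x y + u y - m) ∧
      (∀ x ∈ Set.Icc (0:ℝ) 1,
        (IsGreatest {r : ℝ | ∃ y ∈ Set.Icc (0:ℝ) 1, r = u y - u x + A x y} m ↔
          nonWandering A m x)) := by
  classical
  obtain ⟨hα0, hα1⟩ := hα
  have h0mem : (0:ℝ) ∈ Set.Icc (0:ℝ) 1 := by norm_num
  -- one-variable Hölder estimates
  have hA1 : ∀ a ∈ Set.Icc (0:ℝ) 1, ∀ a' ∈ Set.Icc (0:ℝ) 1, ∀ b ∈ Set.Icc (0:ℝ) 1,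
      |A a b - A a' b| ≤ C * |a - a'| ^ α := by
    intro a ha a' ha' b hb
    have h := hHol a ha b hb a' ha' b hb
    rwa [sub_self, abs_zero, max_eq_left (abs_nonneg _)] at h
  have hA2 : ∀ a ∈ Set.Icc (0:ℝ) 1, ∀ b ∈ Set.Icc (0:ℝ) 1, ∀ b' ∈ Set.Icc (0:ℝ) 1,
      |A a b - A a b'| ≤ C * |b - b'| ^ α := by
    intro a ha b hb b' hb'
    have h := hHol a ha b hb a ha b' hb'
    rwa [sub_self, abs_zero, max_eq_right (abs_nonneg _)] at h
  -- bound on A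
  have hAbd : ∀ a ∈ Set.Icc (0:ℝ) 1, ∀ b ∈ Set.Icc (0:ℝ) 1, |A a b - A 0 0| ≤ C := by
    intro a ha b hb
    have h := hHol a ha b hb 0 h0mem 0 h0mem
    rw [sub_zero, sub_zero] at h
    refine h.trans ?_
    have h1 : max |a| |b| ≤ 1 := by
      apply max_le <;> rw [abs_le] <;> constructor <;> first
        | linarith [ha.1, ha.2] | linarith [hb.1, hb.2]
    calc C * max |a| |b| ^ α ≤ C * 1 :=
          mul_le_mul_of_nonneg_left
            (Real.rpow_le_one (le_max_of_le_left (abs_nonneg _)) h1 hα0.le) hC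
      _ = C := mul_one C
  -- continuity of A on the square
  have hAc : Continuous (fun p : I × I => A p.1 p.2) := by
    rw [← continuousOn_univ]
    refine Stmt19X.contOn_of_holder hα0 hC ?_
    intro p _ q _
    rw [Prod.dist_eq, Subtype.dist_eq, Subtype.dist_eq, Real.dist_eq, Real.dist_eq]
    exact hHol p.1 p.1.2 p.2 p.2.2 q.1 q.1.2 q.2 q.2.2
  -- cycle lemma
  have hmub : ∀ ν : ProbabilityMeasure (I × I),
      (∀ f : C(I, ℝ), ∫ p, (f p.1 - f p.2) ∂(ν : Measure (I × I)) = 0) →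
      ∫ p, A p.1 p.2 ∂(ν : Measure (I × I)) ≤ m := fun ν hν => hm.2 ⟨ν, hν, rfl⟩
  have hcycle : ∀ k : ℕ, 2 ≤ k → ∀ p : ℕ → ℝ, (∀ i < k, p i ∈ Set.Icc (0:ℝ) 1) →
      p (k - 1) = p 0 → ∑ i ∈ Finset.range (k - 1), (A (p i) (p (i + 1)) - m) ≤ 0 :=
    fun k hk p hmem hc => Stmt19X.cycle_nonpos hAc hmub hk hmem hc
  -- countable dense family of base points in [0,1]
  obtain ⟨e, hesurj⟩ := exists_surjective_nat ℚ
  set b : ℕ → ℝ := fun n => min 1 (max 0 ((e n : ℝ))) with hbdef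
  have hbmem : ∀ n, b n ∈ Set.Icc (0:ℝ) 1 :=
    fun n => ⟨le_min zero_le_one (le_max_left _ _), min_le_left _ _⟩
  have hbdense : ∀ x ∈ Set.Icc (0:ℝ) 1, ∀ δ > (0:ℝ), ∃ n, |b n - x| < δ := by
    intro x hx δ hδ
    obtain ⟨r, hr⟩ := exists_rat_near x hδ
    obtain ⟨n, hn⟩ := hesurj r
    refine ⟨n, ?_⟩
    rw [hbdef]; simp only [hn]
    rw [abs_lt] at hr ⊢
    rcases le_total ((r:ℝ)) 0 with h | h
    · rw [max_eq_left h, min_eq_right zero_le_one]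
      constructor <;> linarith [hx.1, hx.2]
    · rw [max_eq_right h]
      rcases le_total ((r:ℝ)) 1 with h2 | h2
      · rw [min_eq_right h2]; constructor <;> linarith
      · rw [min_eq_left h2]; constructor <;> linarith [hx.1, hx.2]
  -- uniform bound on R
  set K : ℝ := |m| + |A 0 0| + C with hKdef
  have hRabs : ∀ w ∈ Set.Icc (0:ℝ) 1, ∀ x ∈ Set.Icc (0:ℝ) 1,
      |Stmt19X.R A m w x| ≤ K := by
    intro w hw x hx
    have hub : Stmt19X.R A m w x ≤ m - A x w :=
      csSup_le ⟨_, Stmt19X.pset_direct hw hx⟩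
        (fun s hs => Stmt19X.pset_ub hcycle hw hx hs)
    have hlb : A w x - m ≤ Stmt19X.R A m w x := Stmt19X.R_ge hcycle hw hx
    have h1 := abs_le.mp (hAbd x hx w hw)
    have h2 := abs_le.mp (hAbd w hw x hx)
    rw [hKdef, abs_le]
    constructor <;> [linarith [neg_abs_le m, le_abs_self m, neg_abs_le (A 0 0)];
      linarith [neg_abs_le m, le_abs_self m, neg_abs_le (A 0 0), le_abs_self (A 0 0)]]
  have hK0 : 0 ≤ K := le_trans (abs_nonneg _) (hRabs 0 h0mem 0 h0mem)
  -- weights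
  set W : ℕ → ℝ := fun j => (2:ℝ)⁻¹ ^ (j + 1) with hWdef
  have hWpos : ∀ j, 0 < W j := fun j => pow_pos (by norm_num) _
  have hWeq : W = fun j => (2:ℝ)⁻¹ * (2:ℝ)⁻¹ ^ j := funext fun j => by
    rw [hWdef]; ring
  have hWsum : Summable W := by
    rw [hWeq]
    exact (summable_geometric_of_lt_one (by norm_num) (by norm_num)).mul_left _
  have hWtsum : ∑' j, W j = 1 := by
    rw [hWeq, tsum_mul_left, tsum_geometric_of_lt_one (by norm_num) (by norm_num)]
    norm_num
  -- summability helper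
  have hsummand : ∀ (f : ℕ → ℝ) (K' : ℝ), (∀ j, |f j| ≤ K') →
      Summable (fun j => W j * f j) := by
    intro f K' hf
    refine Summable.of_abs (Summable.of_nonneg_of_le (fun j => abs_nonneg _)
      (fun j => ?_) (hWsum.mul_right K'))
    rw [abs_mul, abs_of_nonneg (hWpos j).le]
    exact mul_le_mul_of_nonneg_left (hf j) (hWpos j).le
  -- the subaction
  set u : ℝ → ℝ := fun x => ∑' j, W j * (- Stmt19X.R A m (b j) x) with hudef
  have hSx : ∀ x ∈ Set.Icc (0:ℝ) 1, Summable (fun j => W j * (- Stmt19X.R A m (b j) x)) :=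
    fun x hx => hsummand _ K (fun j => by rw [abs_neg]; exact hRabs _ (hbmem j) x hx)
  have hudiff : ∀ x ∈ Set.Icc (0:ℝ) 1, ∀ y ∈ Set.Icc (0:ℝ) 1,
      u x - u y = ∑' j, W j * (Stmt19X.R A m (b j) y - Stmt19X.R A m (b j) x) := by
    intro x hx y hy
    rw [hudef]
    simp only []
    rw [← Summable.tsum_sub (hSx x hx) (hSx y hy)]
    congr 1
    funext j
    ring
  have hSdiff : ∀ x ∈ Set.Icc (0:ℝ) 1, ∀ y ∈ Set.Icc (0:ℝ) 1,
      Summable (fun j => W j * (Stmt19X.R A m (b j) y - Stmt19X.R A m (b j) x)) := by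
    intro x hx y hy
    refine hsummand _ (K + K) (fun j => ?_)
    calc |Stmt19X.R A m (b j) y - Stmt19X.R A m (b j) x|
        ≤ |Stmt19X.R A m (b j) y| + |Stmt19X.R A m (b j) x| := abs_sub _ _
      _ ≤ K + K := add_le_add (hRabs _ (hbmem j) y hy) (hRabs _ (hbmem j) x hx)
  -- subaction property
  have hsub : ∀ x ∈ Set.Icc (0:ℝ) 1, ∀ y ∈ Set.Icc (0:ℝ) 1, A x y - m ≤ u x - u y := by
    intro x hx y hy
    rw [hudiff x hx y hy]
    have h1 : ∀ j, W j * (A x y - m)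
        ≤ W j * (Stmt19X.R A m (b j) y - Stmt19X.R A m (b j) x) := fun j =>
      mul_le_mul_of_nonneg_left
        (by linarith [Stmt19X.R_step hcycle (hbmem j) hx hy]) (hWpos j).le
    calc A x y - m = (∑' j, W j) * (A x y - m) := by rw [hWtsum, one_mul]
      _ = ∑' j, W j * (A x y - m) := (tsum_mul_right).symm
      _ ≤ _ := Summable.tsum_le_tsum h1 (hWsum.mul_right _) (hSdiff x hx y hy)
  -- Hölder continuity of R in the endpoint
  have hRhold : ∀ w ∈ Set.Icc (0:ℝ) 1, ∀ x ∈ Set.Icc (0:ℝ) 1, ∀ y ∈ Set.Icc (0:ℝ) 1,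
      |Stmt19X.R A m w x - Stmt19X.R A m w y| ≤ C * |x - y| ^ α := by
    intro w hw x hx y hy
    rw [abs_le]
    constructor
    · have := Stmt19X.R_end_move hcycle hA2 hw hy hx
      rw [abs_sub_comm] at this
      linarith
    · linarith [Stmt19X.R_end_move hcycle hA2 hw hx hy]
  -- Hölder continuity of u
  have huhold : ∀ x ∈ Set.Icc (0:ℝ) 1, ∀ y ∈ Set.Icc (0:ℝ) 1,
      |u x - u y| ≤ C * |x - y| ^ α := by
    intro x hx y hy
    rw [hudiff x hx y hy, abs_le]
    have hub : ∀ j, W j * (Stmt19X.R A m (b j) y - Stmt19X.R A m (b j) x)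
        ≤ W j * (C * |x - y| ^ α) := fun j =>
      mul_le_mul_of_nonneg_left
        (by
          have := abs_le.mp (hRhold _ (hbmem j) y hy x hx)
          rw [abs_sub_comm y x] at this
          linarith [this.2]) (hWpos j).le
    have hlb : ∀ j, W j * (-(C * |x - y| ^ α))
        ≤ W j * (Stmt19X.R A m (b j) y - Stmt19X.R A m (b j) x) := fun j =>
      mul_le_mul_of_nonneg_left
        (by
          have := abs_le.mp (hRhold _ (hbmem j) y hy x hx)
          rw [abs_sub_comm y x] at this
          linarith [this.1]) (hWpos j).le
    constructor
    · calc -(C * |x - y| ^ α) = (∑' j, W j) * (-(C * |x - y| ^ α)) := by rw [hWtsum, one_mul]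
        _ = ∑' j, W j * (-(C * |x - y| ^ α)) := (tsum_mul_right).symm
        _ ≤ _ := Summable.tsum_le_tsum hlb (hWsum.mul_right _) (hSdiff x hx y hy)
    · calc (∑' j, W j * (Stmt19X.R A m (b j) y - Stmt19X.R A m (b j) x))
          ≤ ∑' j, W j * (C * |x - y| ^ α) :=
            Summable.tsum_le_tsum hub (hSdiff x hx y hy) (hWsum.mul_right _)
        _ = (∑' j, W j) * (C * |x - y| ^ α) := tsum_mul_right
        _ = C * |x - y| ^ α := by rw [hWtsum, one_mul]
  have hucont : ContinuousOn u (Set.Icc (0:ℝ) 1) :=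
    Stmt19X.contOn_of_holder hα0 hC
      (fun x hx y hy => by rw [Real.dist_eq]; exact huhold x hx y hy)
  refine ⟨u, hucont, fun x hx y hy => by linarith [hsub x hx y hy], ?_⟩
  -- the separating property
  intro x hx
  have hub : ∀ r ∈ {r : ℝ | ∃ y ∈ Set.Icc (0:ℝ) 1, r = u y - u x + A x y}, r ≤ m := by
    rintro r ⟨y, hy, rfl⟩
    linarith [hsub x hx y hy]
  constructor
  · -- contact implies non-wandering
    rintro ⟨⟨y, hy, hyeq⟩, -⟩
    refine ⟨hx, ?_⟩
    by_contra hcon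
    push_neg at hcon
    obtain ⟨ε, hε, hcl0⟩ := hcon
    have hcl : ∀ k : ℕ, 2 ≤ k → ∀ p : ℕ → ℝ, p 0 = x → p (k - 1) = x →
        (∀ i < k, p i ∈ Set.Icc (0:ℝ) 1) →
        ∑ i ∈ Finset.range (k - 1), (A (p i) (p (i + 1)) - m) ≤ -ε := by
      intro k hk p hp0 hpk hpm
      have h1 := hcl0 k hk p hp0 hpk hpm
      have h2 := hcycle k hk p hpm (by rw [hpk, hp0])
      rw [abs_of_nonpos h2] at h1
      linarith
    -- choose δ with C * δ^α < ε/2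
    set δ : ℝ := min 1 ((ε / (2*C+2)) ^ (α⁻¹)) with hδdef
    have h2C : (0:ℝ) < 2*C+2 := by linarith
    have hq : (0:ℝ) < ε / (2*C+2) := by positivity
    have hδpos : 0 < δ := lt_min one_pos (Real.rpow_pos_of_pos hq _)
    have hδα : δ ^ α ≤ ε / (2*C+2) := by
      calc δ ^ α ≤ ((ε / (2*C+2)) ^ (α⁻¹)) ^ α :=
            Real.rpow_le_rpow hδpos.le (min_le_right _ _) hα0.le
        _ = ε / (2*C+2) := Real.rpow_inv_rpow hq.le hα0.ne'
    have hCδ : C * δ ^ α < ε / 2 := by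
      have h3 : C * δ ^ α ≤ C * (ε / (2*C+2)) := mul_le_mul_of_nonneg_left hδα hC
      have h4 : C * (ε / (2*C+2)) < ε / 2 := by
        rw [(by ring : C * (ε / (2*C+2)) = C * ε / (2*C+2)), div_lt_div_iff₀ h2C two_pos]
        nlinarith
      linarith
    obtain ⟨n, hn⟩ := hbdense x hx δ hδpos
    -- per-index contact equality
    have hterm : ∀ j, 0 ≤ W j * (Stmt19X.R A m (b j) y - Stmt19X.R A m (b j) x
        - (A x y - m)) := fun j =>
      mul_nonneg (hWpos j).le (by linarith [Stmt19X.R_step hcycle (hbmem j) hx hy])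
    have hSterm : Summable (fun j => W j * (Stmt19X.R A m (b j) y - Stmt19X.R A m (b j) x
        - (A x y - m))) := by
      refine hsummand _ (K + K + |A x y - m|) (fun j => ?_)
      calc |Stmt19X.R A m (b j) y - Stmt19X.R A m (b j) x - (A x y - m)|
          ≤ |Stmt19X.R A m (b j) y - Stmt19X.R A m (b j) x| + |A x y - m| := abs_sub _ _
        _ ≤ K + K + |A x y - m| := by
            have := (abs_sub _ _).trans (add_le_add (hRabs _ (hbmem j) y hy)
              (hRabs _ (hbmem j) x hx))
            linarith
    have htsum0 : ∑' j, W j * (Stmt19X.R A m (b j) y - Stmt19X.R A m (b j) x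
        - (A x y - m)) = 0 := by
      have hrw : (fun j => W j * (Stmt19X.R A m (b j) y - Stmt19X.R A m (b j) x
          - (A x y - m)))
          = fun j => W j * (Stmt19X.R A m (b j) y - Stmt19X.R A m (b j) x)
            - W j * (A x y - m) := funext fun j => by ring
      rw [hrw, Summable.tsum_sub (hSdiff x hx y hy) (hWsum.mul_right _), ← hudiff x hx y hy,
        tsum_mul_right, hWtsum, one_mul]
      linarith [hyeq]
    have heqn : Stmt19X.R A m (b n) y - Stmt19X.R A m (b n) x - (A x y - m) = 0 := by
      have h5 : W n * (Stmt19X.R A m (b n) y - Stmt19X.R A m (b n) x - (A x y - m))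
          ≤ 0 := htsum0 ▸ hSterm.le_tsum n (fun j _ => hterm j)
      have h6 := hterm n
      have h7 : W n * (Stmt19X.R A m (b n) y - Stmt19X.R A m (b n) x - (A x y - m)) = 0 :=
        le_antisymm h5 h6
      rcases mul_eq_zero.mp h7 with h8 | h8
      · exact absurd h8 (hWpos n).ne'
      · exact h8
    -- contradiction chain
    have h1 : A (b n) y - m ≤ Stmt19X.R A m (b n) y := Stmt19X.R_ge hcycle (hbmem n) hy
    have h2 : Stmt19X.R A m (b n) x ≤ -ε + C * |b n - x| ^ α :=
      Stmt19X.R_to_cycle hA1 (hbmem n) hx hcl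
    have h3 := abs_le.mp (hA1 (b n) (hbmem n) x hx y hy)
    have h4 : C * |b n - x| ^ α ≤ C * δ ^ α :=
      mul_le_mul_of_nonneg_left (Real.rpow_le_rpow (abs_nonneg _) hn.le hα0.le) hC
    linarith [h3.1, h3.2]
  · -- non-wandering implies contact
    rintro ⟨-, hnw⟩
    refine ⟨?_, hub⟩
    set g : ℝ → ℝ := fun y => u y - u x + A x y with hgdef
    have hgcont : ContinuousOn g (Set.Icc (0:ℝ) 1) := by
      refine Stmt19X.contOn_of_holder hα0 (by linarith : (0:ℝ) ≤ C + C) ?_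
      intro y hy y' hy'
      rw [Real.dist_eq]
      have hgd : g y - g y' = (u y - u y') + (A x y - A x y') := by rw [hgdef]; ring
      calc |g y - g y'| ≤ |u y - u y'| + |A x y - A x y'| := by
            rw [hgd]; exact abs_add_le _ _
        _ ≤ C * |y - y'| ^ α + C * |y - y'| ^ α :=
            add_le_add (huhold y hy y' hy') (hA2 x hx y hy y' hy')
        _ = (C + C) * |y - y'| ^ α := by ring
    obtain ⟨y0, hy0mem, hy0max⟩ := isCompact_Icc.exists_isMaxOn
      (Set.nonempty_Icc.mpr zero_le_one) hgcont
    have hge : ∀ n : ℕ, m - 1 / (n + 1) < g y0 := by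
      intro n
      have hpos : (0:ℝ) < 1 / (n + 1) := by positivity
      obtain ⟨k, hk, p, hp0, hpk, hpm, habs⟩ := hnw (1 / (n + 1)) hpos
      have htel : ∑ i ∈ Finset.range (k - 1), (u (p i) - u (p (i + 1)))
          = u (p 0) - u (p (k - 1)) := Finset.sum_range_sub' (fun i => u (p i)) (k - 1)
      have htel0 : ∑ i ∈ Finset.range (k - 1), (u (p i) - u (p (i + 1))) = 0 := by
        rw [htel, hp0, hpk, sub_self]
      set T := ∑ i ∈ Finset.range (k - 1),
        (u (p i) - u (p (i + 1)) - (A (p i) (p (i + 1)) - m)) with hTdef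
      have hT : T = - ∑ i ∈ Finset.range (k - 1), (A (p i) (p (i + 1)) - m) := by
        rw [hTdef, Finset.sum_sub_distrib, htel0, zero_sub]
      have hTlt : T < 1 / (n + 1) := by
        rw [hT]
        calc - ∑ i ∈ Finset.range (k - 1), (A (p i) (p (i + 1)) - m)
            ≤ |∑ i ∈ Finset.range (k - 1), (A (p i) (p (i + 1)) - m)| := neg_le_abs _
          _ < 1 / (n + 1) := habs
      have hnn : ∀ i ∈ Finset.range (k - 1),
          0 ≤ u (p i) - u (p (i + 1)) - (A (p i) (p (i + 1)) - m) := by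
        intro i hi
        rw [Finset.mem_range] at hi
        linarith [hsub (p i) (hpm i (by omega)) (p (i + 1)) (hpm (i + 1) (by omega))]
      have h0mem' : (0:ℕ) ∈ Finset.range (k - 1) := Finset.mem_range.mpr (by omega)
      have hfirst : u (p 0) - u (p 1) - (A (p 0) (p 1) - m) ≤ T := by
        rw [hTdef]
        exact Finset.single_le_sum hnn h0mem'
      have hp1mem : p 1 ∈ Set.Icc (0:ℝ) 1 := hpm 1 (by omega)
      have hgy : m - 1 / (n + 1) < g (p 1) := by
        rw [hgdef]
        simp only []
        rw [← hp0]
        linarith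
      calc m - 1 / (n + 1) < g (p 1) := hgy
        _ ≤ g y0 := hy0max hp1mem
    have hgem : m ≤ g y0 := by
      by_contra hlt
      push_neg at hlt
      obtain ⟨n, hn⟩ := exists_nat_one_div_lt (by linarith : (0:ℝ) < m - g y0)
      linarith [hge n]
    have hgle : g y0 ≤ m := hub _ ⟨y0, hy0mem, rfl⟩
    exact ⟨y0, hy0mem, by rw [hgdef] at hgem hgle; simp only [] at hgem hgle; linarith⟩
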